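/- Let d ≥ 1. There exists a constant κ > 0, depending only on d, with the following property: for every c ∈ ℤ^d with c ≠ 0, every real Λ ≥ 3, and all a, b, e ∈ ℤ^d such that (a,b) ∈ D_{Λ+3}^+(c) and (a,e) ∉ D_Λ^+(c), one has |a − e| ≥ κ Λ^{−2} |a|/|c| and |b − e| ≥ κ Λ^{−2} |a|/|c|. -/

import Mathlib

/-- The lattice point `a ∈ ℤ^d` viewed as a vector in Euclidean space `ℝ^d`. -/
noncomputable def latt {d : ℕ} (a : Fin d → ℤ) : EuclideanSpace ℝ (Fin d) :=
  WithLp.toLp 2 (fun i => (a i : ℝ))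

/-- The Lipschitz domain `D_Λ^+(c)`: the pair `(a, b)` belongs to it iff there are
`a', b' ∈ ℤ^d` and a real `t ≥ 0` with `a = a' + tc`, `b = b' + tc`,
`|a| ≥ Λ(|a'| + |c|)|c|`, `|b| ≥ Λ(|b'| + |c|)|c|`, and
`|a|/|c| ≥ 2Λ²`, `|b|/|c| ≥ 2Λ²`. -/
def LipDom {d : ℕ} (Λ : ℝ) (c a b : Fin d → ℤ) : Prop :=
  ∃ (a' b' : Fin d → ℤ) (t : ℝ), 0 ≤ t ∧
    latt a = latt a' + t • latt c ∧
    latt b = latt b' + t • latt c ∧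
    Λ * (‖latt a'‖ + ‖latt c‖) * ‖latt c‖ ≤ ‖latt a‖ ∧
    Λ * (‖latt b'‖ + ‖latt c‖) * ‖latt c‖ ≤ ‖latt b‖ ∧
    2 * Λ ^ 2 ≤ ‖latt a‖ / ‖latt c‖ ∧
    2 * Λ ^ 2 ≤ ‖latt b‖ / ‖latt c‖

set_option maxHeartbeats 1600000

lemma latt_sub_add {d : ℕ} (e x x' : Fin d → ℤ) :
    latt (e - x + x') = latt e - latt x + latt x' := by
  ext i
  simp [latt]

/-- Key lemma: if `x = x' + tc` satisfies the `Λ+3` conditions and `e` is within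
`(1/2) Λ⁻² |x|/|c|` of `x`, then `e` satisfies the `Λ` conditions with shift `t`. -/
lemma key {d : ℕ} {Λ : ℝ} (hΛ : 3 ≤ Λ) {c x e x' : Fin d → ℤ} {t : ℝ}
    (hC : 1 ≤ ‖latt c‖)
    (hx : latt x = latt x' + t • latt c)
    (f1 : (Λ+3) * (‖latt x'‖ + ‖latt c‖) * ‖latt c‖ ≤ ‖latt x‖)
    (h2X : 2*(Λ+3)^2 ≤ ‖latt x‖ / ‖latt c‖)
    (hδ : ‖latt x - latt e‖ < 1/2 * Λ⁻¹^2 * (‖latt x‖ / ‖latt c‖)) :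
    ∃ e' : Fin d → ℤ, latt e = latt e' + t • latt c ∧
      Λ * (‖latt e'‖ + ‖latt c‖) * ‖latt c‖ ≤ ‖latt e‖ ∧
      2*Λ^2 ≤ ‖latt e‖ / ‖latt c‖ := by
  set C := ‖latt c‖ with hCdef
  set X := ‖latt x‖ with hXdef
  set δ := ‖latt x - latt e‖ with hδdef
  have hΛ0 : (0:ℝ) < Λ := by linarith
  have hC0 : (0:ℝ) < C := by linarith
  have hδ0 : 0 ≤ δ := norm_nonneg _
  have hX'0 : 0 ≤ ‖latt x'‖ := norm_nonneg _
  have hE0 : 0 ≤ ‖latt e‖ := norm_nonneg _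
  -- product form of h2X
  have h2X' : 2*(Λ+3)^2 * C ≤ X := (le_div_iff₀ hC0).mp h2X
  have hX0 : 0 < X := by nlinarith
  -- product form of hδ
  have hδ' : δ * (2*Λ^2*C) < X := by
    have h := mul_lt_mul_of_pos_right hδ (show (0:ℝ) < 2*Λ^2*C by positivity)
    calc δ * (2*Λ^2*C) < (1/2 * Λ⁻¹^2 * (X/C)) * (2*Λ^2*C) := h
      _ = X := by field_simp
  refine ⟨e - x + x', ?_, ?_, ?_⟩
  · rw [latt_sub_add, hx]; abel
  · -- norm condition
    set E' := ‖latt (e - x + x')‖ with hE'def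
    have f2 : E' ≤ ‖latt x'‖ + δ := by
      rw [hE'def, latt_sub_add]
      calc ‖latt e - latt x + latt x'‖ = ‖latt x' - (latt x - latt e)‖ := by
            congr 1; abel
        _ ≤ ‖latt x'‖ + ‖latt x - latt e‖ := norm_sub_le _ _
    have f3 : X - δ ≤ ‖latt e‖ := by
      have := norm_sub_norm_le (latt x) (latt e)
      linarith
    have K1 : Λ * ((Λ+3) * (‖latt x'‖ + C) * C) ≤ Λ * X :=
      mul_le_mul_of_nonneg_left f1 hΛ0.le
    have step : Λ * (E' + C) * C ≤ Λ * ((‖latt x'‖ + δ) + C) * C := by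
      gcongr
    have main : Λ * ((‖latt x'‖ + δ) + C) * C * (2*Λ*(Λ+3)) ≤ ‖latt e‖ * (2*Λ*(Λ+3)) := by
      have hA1 : 2*Λ*(Λ * ((Λ+3) * (‖latt x'‖ + C) * C)) ≤ 2*Λ*(Λ*X) :=
        mul_le_mul_of_nonneg_left K1 (by positivity)
      have hA2 : (Λ+3)*(δ * (2*Λ^2*C)) ≤ (Λ+3)*X :=
        mul_le_mul_of_nonneg_left hδ'.le (by positivity)
      have hA3 : 2*Λ*(Λ+3)*δ ≤ 2*X := by
        have p1 : 0 ≤ (C - 1) * (2*Λ^2*δ) := mul_nonneg (by linarith) (by positivity)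
        have p2 : 0 ≤ (Λ - 3) * (2*Λ*δ) := mul_nonneg (by linarith) (by positivity)
        nlinarith [hδ']
      have hA4 : (X - δ) * (2*Λ*(Λ+3)) ≤ ‖latt e‖ * (2*Λ*(Λ+3)) :=
        mul_le_mul_of_nonneg_right f3 (by positivity)
      have hmono : 2*Λ^2*X + (Λ+3)*X + 2*X ≤ 2*Λ*(Λ+3)*X := by
        nlinarith [mul_nonneg hX0.le (by linarith : (0:ℝ) ≤ Λ - 1)]
      have main2 : Λ * ((‖latt x'‖ + δ) + C) * C * (2*Λ*(Λ+3)) ≤ (X - δ) * (2*Λ*(Λ+3)) := by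
        nlinarith [hA1, hA2, hA3, hmono]
      linarith
    have := le_of_mul_le_mul_right main (by positivity : (0:ℝ) < 2*Λ*(Λ+3))
    linarith
  · -- size condition
    rw [le_div_iff₀ hC0]
    have f3 : X - δ ≤ ‖latt e‖ := by
      have := norm_sub_norm_le (latt x) (latt e)
      linarith
    have key2 : 0 ≤ ((2*Λ^2 - 1) * (Λ+3)^2 - 2*Λ^2*Λ^2) * C := by
      apply mul_nonneg _ hC0.le
      nlinarith [mul_nonneg (mul_nonneg hΛ0.le hΛ0.le) (by linarith : (0:ℝ) ≤ Λ - 3), hΛ]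
    have hint1 : (2*Λ^2 - 1) * (2*(Λ+3)^2 * C) ≤ (2*Λ^2 - 1) * X :=
      mul_le_mul_of_nonneg_left h2X' (by nlinarith [sq_nonneg Λ, hΛ])
    have main : 2*Λ^2*C * (2*Λ^2) ≤ ‖latt e‖ * (2*Λ^2) := by
      nlinarith [hint1, key2, hδ', mul_le_mul_of_nonneg_right f3 (show (0:ℝ) ≤ 2*Λ^2 by positivity)]
    exact le_of_mul_le_mul_right main (by positivity)
lemma latt_sub' {d : ℕ} (a b : Fin d → ℤ) : latt (a - b) = latt a - latt b := by
  ext i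
  simp [latt]

lemma one_le_norm_latt {d : ℕ} {c : Fin d → ℤ} (hc : c ≠ 0) : 1 ≤ ‖latt c‖ := by
  obtain ⟨i, hi⟩ := Function.ne_iff.mp hc
  have h1 : (1:ℝ) ≤ |(c i : ℝ)| := by
    have : 1 ≤ |c i| := Int.one_le_abs (by simpa using hi)
    exact_mod_cast (by exact_mod_cast this : (1:ℝ) ≤ (|c i| : ℝ))
  have h2 : |(c i : ℝ)| ≤ ‖latt c‖ := by
    rw [EuclideanSpace.norm_eq]
    have : |(c i : ℝ)| = Real.sqrt (‖latt c i‖ ^ 2) := by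
      rw [Real.sqrt_sq_eq_abs]; simp [latt]
    rw [this]
    apply Real.sqrt_le_sqrt
    exact Finset.single_le_sum (f := fun j => ‖latt c j‖ ^ 2) (fun j _ => sq_nonneg _)
      (Finset.mem_univ i)
  linarith


/-- Corollary 2.2(iv): there is `κ > 0`, depending only on `d`, such that whenever
`(a,b) ∈ D_{Λ+3}^+(c)` and `(a,e) ∉ D_Λ^+(c)` (with `Λ ≥ 3`, `c ≠ 0`),
both `|a − e|` and `|b − e|` are at least `κ Λ⁻² |a|/|c|`. -/
theorem stmt_7 (d : ℕ) (hd : 1 ≤ d) :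
    ∃ κ : ℝ, 0 < κ ∧ ∀ c : Fin d → ℤ, c ≠ 0 → ∀ Λ : ℝ, 3 ≤ Λ →
      ∀ a b e : Fin d → ℤ, LipDom (Λ + 3) c a b → ¬ LipDom Λ c a e →
        κ * Λ⁻¹ ^ 2 * (‖latt a‖ / ‖latt c‖) ≤ ‖latt (a - e)‖ ∧
        κ * Λ⁻¹ ^ 2 * (‖latt a‖ / ‖latt c‖) ≤ ‖latt (b - e)‖ := by
  refine ⟨1/100, by norm_num, ?_⟩
  intro c hc Λ hΛ a b e hab hae
  obtain ⟨a', b', t, ht, haeq, hbeq, hA, hB, h2A, h2B⟩ := hab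
  have hC : 1 ≤ ‖latt c‖ := one_le_norm_latt hc
  set C := ‖latt c‖ with hCdef
  set A := ‖latt a‖ with hAdef
  set B := ‖latt b‖ with hBdef
  have hΛ0 : (0:ℝ) < Λ := by linarith
  have hC0 : (0:ℝ) < C := by linarith
  have hA'0 : 0 ≤ ‖latt a'‖ := norm_nonneg _
  have hB'0 : 0 ≤ ‖latt b'‖ := norm_nonneg _
  have hA0 : (0:ℝ) < A := by
    have := (le_div_iff₀ hC0).mp h2A
    nlinarith
  have hB0 : (0:ℝ) < B := by
    have := (le_div_iff₀ hC0).mp h2B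
    nlinarith
  -- the `a`-side conditions for membership in `D_Λ`
  have condA1 : Λ * (‖latt a'‖ + C) * C ≤ A := by nlinarith [hA]
  have condA2 : 2 * Λ ^ 2 ≤ A / C := by
    rw [le_div_iff₀ hC0]
    have := (le_div_iff₀ hC0).mp h2A
    nlinarith [mul_pos hΛ0 hC0]
  -- comparability of A and B
  have htC : ‖t • latt c‖ = t * C := by
    rw [norm_smul, Real.norm_of_nonneg ht]
  have hAub : A ≤ ‖latt a'‖ + t * C := by
    calc A = ‖latt a' + t • latt c‖ := by rw [← haeq]
      _ ≤ ‖latt a'‖ + ‖t • latt c‖ := norm_add_le _ _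
      _ = ‖latt a'‖ + t * C := by rw [htC]
  have htCub : t * C ≤ B + ‖latt b'‖ := by
    have h : t • latt c = latt b - latt b' := by rw [hbeq]; abel
    rw [← htC, h]
    exact norm_sub_le _ _
  have hA'small : 6 * ‖latt a'‖ ≤ A := by
    nlinarith [hA, mul_nonneg hA'0 (by linarith : (0:ℝ) ≤ C - 1),
      mul_nonneg (mul_nonneg (by linarith : (0:ℝ) ≤ Λ - 3) (by positivity : (0:ℝ) ≤ ‖latt a'‖ + C)) hC0.le,
      mul_pos hC0 hC0]
  have hB'small : 6 * ‖latt b'‖ ≤ B := by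
    nlinarith [hB, mul_nonneg hB'0 (by linarith : (0:ℝ) ≤ C - 1),
      mul_nonneg (mul_nonneg (by linarith : (0:ℝ) ≤ Λ - 3) (by positivity : (0:ℝ) ≤ ‖latt b'‖ + C)) hC0.le,
      mul_pos hC0 hC0]
  have hAB : A ≤ 2 * B := by linarith
  constructor
  · by_contra h1
    push_neg at h1
    apply hae
    have hδ : ‖latt a - latt e‖ < 1/2 * Λ⁻¹^2 * (A / C) := by
      rw [← latt_sub']
      have hpos : 0 ≤ Λ⁻¹^2 * (A / C) := by positivity
      calc ‖latt (a - e)‖ < 1/100 * Λ⁻¹^2 * (A / C) := h1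
        _ ≤ 1/2 * Λ⁻¹^2 * (A / C) := by nlinarith [hpos]
    obtain ⟨e', heeq, hE1, hE2⟩ := key hΛ hC haeq hA h2A hδ
    exact ⟨a', e', t, ht, haeq, heeq, condA1, hE1, condA2, hE2⟩
  · by_contra h2
    push_neg at h2
    apply hae
    have hδ : ‖latt b - latt e‖ < 1/2 * Λ⁻¹^2 * (B / C) := by
      rw [← latt_sub']
      have hpos : 0 ≤ Λ⁻¹^2 * (B / C) := by positivity
      have hstep : Λ⁻¹^2 * (A / C) ≤ Λ⁻¹^2 * ((2*B) / C) := by gcongr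
      calc ‖latt (b - e)‖ < 1/100 * Λ⁻¹^2 * (A / C) := h2
        _ ≤ 1/100 * Λ⁻¹^2 * ((2*B) / C) := by nlinarith [hstep]
        _ = 1/50 * Λ⁻¹^2 * (B / C) := by ring
        _ ≤ 1/2 * Λ⁻¹^2 * (B / C) := by nlinarith [hpos]
    obtain ⟨e', heeq, hE1, hE2⟩ := key hΛ hC hbeq hB h2B hδ
    exact ⟨a', e', t, ht, haeq, heeq, condA1, hE1, condA2, hE2⟩
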